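/- Let s : (0,1) → [0,∞) be a probability density with ∫₀¹ s(t) dt = 1, set σ_i := ∫_{(i−1)/n}^{i/n} s(t) dt for i = 1, ..., n, let P(σ) be the permutahedron of σ, let h(l) := max_{λ ∈ P(σ)} ⟨λ, l⟩, and let u_n := 𝟏/n ∈ ℝⁿ. Define Ω₁(λ) := Σ_{i=1}^n λ_i log(n λ_i) and Ω₂(λ) := (1/2)‖λ − u_n‖₂². Then for every ν ≥ 0 and l ∈ ℝⁿ: 0 ≤ h(l) − h_{νΩ₁}(l) ≤ ν Ω₁(σ) ≤ ν ∫₀¹ s(t) ln s(t) dt = ν KL(s‖u), and 0 ≤ h(l) − h_{νΩ₂}(l) ≤ (ν/2)‖σ − u_n‖₂² ≤ (ν/(2n)) ∫₀¹ (s(t) − 1)² dt = (ν/(2n)) χ²(s‖u), where h_{νΩ}(l) := max_{λ ∈ P(σ)} { ⟨λ, l⟩ − ν Ω(λ) } and u ≡ 1 is the uniform density on (0,1). -/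

import Mathlib

open MeasureTheory Set

/-- The permutahedron generated by `σ`: the image of `σ` under all doubly stochastic
matrices. -/
def permutahedron {n : ℕ} (σ : Fin n → ℝ) : Set (Fin n → ℝ) :=
  {lam | ∃ P : Matrix (Fin n) (Fin n) ℝ,
    (∀ i j, P i j ∈ Set.Icc (0 : ℝ) 1) ∧ (∀ i, ∑ j, P i j = 1) ∧ (∀ j, ∑ i, P i j = 1) ∧
    lam = P.mulVec σ}

/-- The standard pairing `⟨a, b⟩ = ∑ᵢ aᵢ bᵢ` on `ℝⁿ`. -/
def dotp {n : ℕ} (a b : Fin n → ℝ) : ℝ := ∑ i, a i * b i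

/-- `h(l) = max_{λ ∈ P(σ)} ⟨λ, l⟩` (via `sSup`). -/
noncomputable def hmax {n : ℕ} (σ : Fin n → ℝ) (l : Fin n → ℝ) : ℝ :=
  sSup ((fun lam => dotp lam l) '' permutahedron σ)

/-- `h_{νΩ}(l) = max_{λ ∈ P(σ)} { ⟨λ, l⟩ − ν Ω(λ) }` (via `sSup`). -/
noncomputable def smoothedMax {n : ℕ} (σ : Fin n → ℝ) (Om : (Fin n → ℝ) → ℝ) (ν : ℝ)
    (l : Fin n → ℝ) : ℝ :=
  sSup ((fun lam => dotp lam l - ν * Om lam) '' permutahedron σ)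

/-- The centered negative entropy `Ω₁(λ) = ∑ᵢ λᵢ log(n λᵢ)`. -/
noncomputable def Om1 {n : ℕ} (lam : Fin n → ℝ) : ℝ := ∑ i, lam i * Real.log (n * lam i)

/-- The centered squared Euclidean norm `Ω₂(λ) = ½‖λ − 𝟏/n‖₂²`. -/
noncomputable def Om2 {n : ℕ} (lam : Fin n → ℝ) : ℝ := (∑ i, (lam i - 1 / n) ^ 2) / 2

lemma perm_self {n : ℕ} (σ : Fin n → ℝ) : σ ∈ permutahedron σ :=
  ⟨1, fun i j => by by_cases h : i = j <;> simp [Matrix.one_apply, h],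
    fun i => by simp [Matrix.one_apply],
    fun j => by simp [Matrix.one_apply],
    by rw [Matrix.one_mulVec]⟩

lemma perm_mem_props {n : ℕ} {σ : Fin n → ℝ} (hσ0 : ∀ j, 0 ≤ σ j) {lam : Fin n → ℝ}
    (h : lam ∈ permutahedron σ) :
    (∀ i, 0 ≤ lam i) ∧ (∀ i, lam i ≤ ∑ j, σ j) ∧ (∑ i, lam i = ∑ j, σ j) := by
  obtain ⟨P, hP01, hProw, hPcol, rfl⟩ := h
  have hmv : ∀ i, P.mulVec σ i = ∑ j, P i j * σ j := fun i => rfl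
  refine ⟨fun i => ?_, fun i => ?_, ?_⟩
  · rw [hmv]; exact Finset.sum_nonneg fun j _ => mul_nonneg (hP01 i j).1 (hσ0 j)
  · rw [hmv]
    calc ∑ j, P i j * σ j ≤ ∑ j, 1 * σ j :=
          Finset.sum_le_sum fun j _ => mul_le_mul_of_nonneg_right (hP01 i j).2 (hσ0 j)
      _ = ∑ j, σ j := by simp
  · simp only [hmv]
    rw [Finset.sum_comm]
    refine Finset.sum_congr rfl fun j _ => ?_
    rw [← Finset.sum_mul, hPcol j, one_mul]

lemma perm_convex_sum {n : ℕ} {σ : Fin n → ℝ} (hσ0 : ∀ j, 0 ≤ σ j) {lam : Fin n → ℝ}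
    (h : lam ∈ permutahedron σ) {f : ℝ → ℝ} (hf : ConvexOn ℝ (Set.Ici 0) f) :
    ∑ i, f (lam i) ≤ ∑ j, f (σ j) := by
  obtain ⟨P, hP01, hProw, hPcol, rfl⟩ := h
  have hmv : ∀ i, P.mulVec σ i = ∑ j, P i j * σ j := fun i => rfl
  have key : ∀ i, f (P.mulVec σ i) ≤ ∑ j, P i j * f (σ j) := by
    intro i
    have := hf.map_sum_le (t := Finset.univ) (w := fun j => P i j) (p := σ)
      (fun j _ => (hP01 i j).1) (hProw i) (fun j _ => hσ0 j)
    simpa [hmv, smul_eq_mul] using this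
  calc ∑ i, f (P.mulVec σ i) ≤ ∑ i, ∑ j, P i j * f (σ j) :=
        Finset.sum_le_sum fun i _ => key i
    _ = ∑ j, f (σ j) := by
        rw [Finset.sum_comm]
        refine Finset.sum_congr rfl fun j _ => ?_
        rw [← Finset.sum_mul, hPcol j, one_mul]

lemma convexOn_sub_sq (c : ℝ) : ConvexOn ℝ Set.univ (fun x : ℝ => (x - c) ^ 2) := by
  refine ⟨convex_univ, fun x _ y _ a b ha hb hab => ?_⟩
  have hb' : b = 1 - a := by linarith
  subst hb'
  simp only [smul_eq_mul]
  nlinarith [mul_nonneg (mul_nonneg ha hb) (sq_nonneg (x - y))]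

lemma xlognx_eq (n : ℕ) [NeZero n] :
    (fun x : ℝ => x * Real.log ((n : ℝ) * x))
      = fun x : ℝ => x * Real.log x + Real.log n * x := by
  funext x
  rcases eq_or_ne x 0 with rfl | hx
  · simp
  · rw [Real.log_mul (Nat.cast_ne_zero.mpr (NeZero.ne n)) hx]; ring

lemma convexOn_xlognx (n : ℕ) [NeZero n] :
    ConvexOn ℝ (Set.Ici (0 : ℝ)) (fun x : ℝ => x * Real.log ((n : ℝ) * x)) := by
  have hn : (1 : ℝ) ≤ n := by exact_mod_cast Nat.one_le_iff_ne_zero.mpr (NeZero.ne n)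
  rw [xlognx_eq]
  exact Real.convexOn_mul_log.add
    (by simpa [smul_eq_mul] using (convexOn_id (convex_Ici (0:ℝ))).smul (Real.log_nonneg hn))

lemma jensen_Ioo {s g : ℝ → ℝ} {a b : ℝ} (hab : a < b)
    (hs : ∀ x ∈ Ioo a b, s x ∈ Ici (0 : ℝ))
    (hg : ConvexOn ℝ (Ici 0) g) (hgc : ContinuousOn g (Ici 0))
    (hsi : IntegrableOn s (Ioo a b)) (hgi : IntegrableOn (fun t => g (s t)) (Ioo a b)) :
    g ((b - a)⁻¹ * ∫ t in Ioo a b, s t) ≤ (b - a)⁻¹ * ∫ t in Ioo a b, g (s t) := by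
  have hba : (0 : ℝ) < b - a := sub_pos.mpr hab
  haveI : NeZero (volume.restrict (Ioo a b)) := by
    refine ⟨fun h => ?_⟩
    have h2 := Measure.restrict_eq_zero.mp h
    rw [Real.volume_Ioo] at h2
    simp [ENNReal.ofReal_eq_zero, not_le.mpr hba] at h2
  have hfs : ∀ᵐ x ∂(volume.restrict (Ioo a b)), s x ∈ Ici (0 : ℝ) :=
    ae_restrict_of_forall_mem measurableSet_Ioo hs
  have h := hg.map_average_le hgc isClosed_Ici hfs hsi hgi
  rw [average_eq, average_eq] at h
  simpa [Measure.restrict_apply_univ, Real.volume_Ioo,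
    ENNReal.toReal_ofReal hba.le, smul_eq_mul, max_eq_left hba.le] using h

lemma partition_sum {n : ℕ} [NeZero n] (f : ℝ → ℝ) (hf : IntegrableOn f (Ioo (0 : ℝ) 1)) :
    ∑ i : Fin n, (∫ t in Ioo ((i : ℝ) / n) (((i : ℝ) + 1) / n), f t)
      = ∫ t in Ioo (0 : ℝ) 1, f t := by
  have hn : (0 : ℝ) < n := Nat.cast_pos.mpr (Nat.pos_of_ne_zero (NeZero.ne n))
  have hIoc : IntegrableOn f (Ioc (0 : ℝ) 1) := by
    rwa [integrableOn_Ioc_iff_integrableOn_Ioo]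
  have hint : ∀ k : ℕ, k < n → IntervalIntegrable f volume ((k : ℝ) / n) (((k : ℝ) + 1) / n) := by
    intro k hk
    have hle : (k : ℝ) / n ≤ ((k : ℝ) + 1) / n := by gcongr; linarith
    rw [intervalIntegrable_iff_integrableOn_Ioc_of_le hle]
    refine hIoc.mono_set (Ioc_subset_Ioc (by positivity) ?_)
    rw [div_le_one hn]
    exact_mod_cast Nat.succ_le_of_lt hk
  have step : ∀ k : ℕ, k < n → (∫ t in Ioo ((k : ℝ) / n) (((k : ℝ) + 1) / n), f t)
      = ∫ t in ((k : ℝ) / n)..(((k : ℝ) + 1) / n), f t := by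
    intro k hk
    rw [intervalIntegral.integral_of_le (by gcongr; linarith), integral_Ioc_eq_integral_Ioo]
  rw [Fin.sum_univ_eq_sum_range (fun k => ∫ t in Ioo ((k : ℝ) / n) (((k : ℝ) + 1) / n), f t)]
  rw [Finset.sum_congr rfl (fun k hk => step k (Finset.mem_range.mp hk))]
  have adj := intervalIntegral.sum_integral_adjacent_intervals
    (a := fun k : ℕ => (k : ℝ) / n) (n := n) (μ := volume) (f := f) ?_
  · have e1 : ∀ k ∈ Finset.range n, (∫ t in ((k : ℝ) / n)..(((k : ℝ) + 1) / n), f t)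
        = ∫ t in (((k : ℕ) : ℝ) / n)..((((k + 1 : ℕ)) : ℝ) / n), f t := by
      intro k _; push_cast; ring_nf
    rw [Finset.sum_congr rfl e1, adj]
    norm_num
    rw [intervalIntegral.integral_of_le zero_le_one, integral_Ioc_eq_integral_Ioo]
  · intro k hk
    have := hint k hk
    push_cast
    convert this using 2

lemma om1_nonneg {n : ℕ} [NeZero n] {lam : Fin n → ℝ} (h0 : ∀ i, 0 ≤ lam i)
    (h1 : ∑ i, lam i = 1) : 0 ≤ Om1 lam := by
  have hn : (0 : ℝ) < n := Nat.cast_pos.mpr (Nat.pos_of_ne_zero (NeZero.ne n))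
  have key := Real.convexOn_mul_log.map_sum_le (t := Finset.univ)
    (w := fun _ : Fin n => (n : ℝ)⁻¹) (p := fun i => (n : ℝ) * lam i)
    (fun i _ => by positivity)
    (by simp [Finset.card_univ, mul_comm])
    (fun i _ => mul_nonneg hn.le (h0 i))
  have hl : (∑ i, (n : ℝ)⁻¹ • ((n : ℝ) * lam i)) = 1 := by
    have : ∀ i : Fin n, (n : ℝ)⁻¹ • ((n : ℝ) * lam i) = lam i := fun i => by
      rw [smul_eq_mul, inv_mul_cancel_left₀ hn.ne']
    rw [Finset.sum_congr rfl fun i _ => this i, h1]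
  have hr : (∑ i, (n : ℝ)⁻¹ • (((n : ℝ) * lam i) * Real.log ((n : ℝ) * lam i))) = Om1 lam := by
    unfold Om1
    refine Finset.sum_congr rfl fun i _ => ?_
    rw [smul_eq_mul, ← mul_assoc, inv_mul_cancel_left₀ hn.ne']
  rw [hl] at key
  simp only [smul_eq_mul] at key hr
  rw [hr] at key
  simpa using key

lemma smoothed_bounds {n : ℕ} {σ : Fin n → ℝ} (hσ0 : ∀ j, 0 ≤ σ j) (hσ1 : ∑ j, σ j = 1)
    {Om : (Fin n → ℝ) → ℝ}
    (hOm0 : ∀ lam ∈ permutahedron σ, 0 ≤ Om lam)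
    (hOmσ : ∀ lam ∈ permutahedron σ, Om lam ≤ Om σ)
    {ν : ℝ} (hν : 0 ≤ ν) (l : Fin n → ℝ) :
    0 ≤ hmax σ l - smoothedMax σ Om ν l ∧ hmax σ l - smoothedMax σ Om ν l ≤ ν * Om σ := by
  have hub : ∀ lam ∈ permutahedron σ, dotp lam l ≤ ∑ i, |l i| := by
    intro lam hlam
    obtain ⟨h0, h1, _⟩ := perm_mem_props hσ0 hlam
    refine Finset.sum_le_sum fun i _ => ?_
    have hle : lam i ≤ 1 := (h1 i).trans_eq hσ1
    calc lam i * l i ≤ lam i * |l i| := mul_le_mul_of_nonneg_left (le_abs_self _) (h0 i)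
      _ ≤ 1 * |l i| := mul_le_mul_of_nonneg_right hle (abs_nonneg _)
      _ = |l i| := one_mul _
  have hbdd1 : BddAbove ((fun lam => dotp lam l) '' permutahedron σ) :=
    ⟨∑ i, |l i|, by rintro x ⟨lam, hlam, rfl⟩; exact hub lam hlam⟩
  have hbdd2 : BddAbove ((fun lam => dotp lam l - ν * Om lam) '' permutahedron σ) := by
    refine ⟨∑ i, |l i|, ?_⟩
    rintro x ⟨lam, hlam, rfl⟩
    have h0 := mul_nonneg hν (hOm0 lam hlam)
    have := hub lam hlam
    dsimp only
    linarith
  have hne1 : ((fun lam => dotp lam l) '' permutahedron σ).Nonempty :=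
    ⟨_, ⟨σ, perm_self σ, rfl⟩⟩
  have hne2 : ((fun lam => dotp lam l - ν * Om lam) '' permutahedron σ).Nonempty :=
    ⟨_, ⟨σ, perm_self σ, rfl⟩⟩
  constructor
  · rw [sub_nonneg]
    refine csSup_le hne2 ?_
    rintro x ⟨lam, hlam, rfl⟩
    have h0 := mul_nonneg hν (hOm0 lam hlam)
    have hmem : dotp lam l ∈ (fun lam => dotp lam l) '' permutahedron σ := ⟨lam, hlam, rfl⟩
    have := le_csSup hbdd1 hmem
    dsimp only
    unfold hmax
    linarith
  · rw [sub_le_iff_le_add]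
    refine csSup_le hne1 ?_
    rintro x ⟨lam, hlam, rfl⟩
    have hmem : dotp lam l - ν * Om lam
        ∈ (fun lam => dotp lam l - ν * Om lam) '' permutahedron σ := ⟨lam, hlam, rfl⟩
    have h1 := le_csSup hbdd2 hmem
    have h2 : ν * Om lam ≤ ν * Om σ := mul_le_mul_of_nonneg_left (hOmσ lam hlam) hν
    dsimp only
    unfold smoothedMax
    linarith

theorem stmt14 {n : ℕ} [NeZero n]
    (s : ℝ → ℝ)
    (hs_nonneg : ∀ t ∈ Set.Ioo (0 : ℝ) 1, 0 ≤ s t)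
    (hs_density : ∫ t in Set.Ioo (0 : ℝ) 1, s t = 1)
    (hKL_int : MeasureTheory.IntegrableOn (fun t => s t * Real.log (s t)) (Set.Ioo (0 : ℝ) 1))
    (hchi_int : MeasureTheory.IntegrableOn (fun t => (s t - 1) ^ 2) (Set.Ioo (0 : ℝ) 1))
    (σ : Fin n → ℝ) (hσ : ∀ i : Fin n, σ i = ∫ t in ((i : ℝ) / n)..(((i : ℝ) + 1) / n), s t)
    (ν : ℝ) (hν : 0 ≤ ν) (l : Fin n → ℝ) :
    (0 ≤ hmax σ l - smoothedMax σ Om1 ν l ∧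
      hmax σ l - smoothedMax σ Om1 ν l ≤ ν * Om1 σ ∧
      Om1 σ ≤ ∫ t in Set.Ioo (0 : ℝ) 1, s t * Real.log (s t)) ∧
    (0 ≤ hmax σ l - smoothedMax σ Om2 ν l ∧
      hmax σ l - smoothedMax σ Om2 ν l ≤ ν / 2 * (∑ i, (σ i - 1 / n) ^ 2) ∧
      (∑ i, (σ i - 1 / n) ^ 2) ≤ (1 / (n : ℝ)) * ∫ t in Set.Ioo (0 : ℝ) 1, (s t - 1) ^ 2) := by
  have hn : (0 : ℝ) < n := Nat.cast_pos.mpr (Nat.pos_of_ne_zero (NeZero.ne n))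
  have hs_int : IntegrableOn s (Ioo (0 : ℝ) 1) := by
    by_contra h
    rw [integral_undef h] at hs_density
    norm_num at hs_density
  have hsub : ∀ i : Fin n, Ioo ((i : ℝ) / n) (((i : ℝ) + 1) / n) ⊆ Ioo (0 : ℝ) 1 := by
    intro i
    refine Ioo_subset_Ioo (by positivity) ?_
    rw [div_le_one hn]
    have hi : (i : ℕ) < n := i.isLt
    have : ((i : ℕ) : ℝ) + 1 ≤ n := by exact_mod_cast Nat.succ_le_of_lt hi
    exact this
  have hσ' : ∀ i : Fin n, σ i = ∫ t in Ioo ((i : ℝ) / n) (((i : ℝ) + 1) / n), s t := by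
    intro i
    rw [hσ i, intervalIntegral.integral_of_le (by gcongr; linarith),
      integral_Ioc_eq_integral_Ioo]
  have hσ0 : ∀ i, 0 ≤ σ i := by
    intro i
    rw [hσ' i]
    exact setIntegral_nonneg measurableSet_Ioo fun x hx => hs_nonneg x (hsub i hx)
  have hσ1 : ∑ i, σ i = 1 := by
    rw [Finset.sum_congr rfl fun i _ => hσ' i, partition_sum s hs_int, hs_density]
  have hablt : ∀ i : Fin n, ((i : ℝ) / n) < (((i : ℝ) + 1) / n) := by
    intro i; gcongr; linarith
  have hinv : ∀ i : Fin n, ((((i : ℝ) + 1) / n) - ((i : ℝ) / n))⁻¹ = (n : ℝ) := by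
    intro i
    have e : (((i : ℝ) + 1) / n) - ((i : ℝ) / n) = 1 / n := by ring
    rw [e, one_div, inv_inv]
  have jen1 : ∀ i : Fin n, σ i * Real.log ((n : ℝ) * σ i)
      ≤ ∫ t in Ioo ((i : ℝ) / n) (((i : ℝ) + 1) / n), s t * Real.log (s t) := by
    intro i
    have h := jensen_Ioo (s := s) (g := fun y => y * Real.log y) (hablt i)
      (fun x hx => hs_nonneg x (hsub i hx)) Real.convexOn_mul_log
      Real.continuous_mul_log.continuousOn
      (hs_int.mono_set (hsub i)) (hKL_int.mono_set (hsub i))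
    rw [hinv i, ← hσ' i] at h
    have h' : (n : ℝ) * (σ i * Real.log ((n : ℝ) * σ i))
        ≤ (n : ℝ) * ∫ t in Ioo ((i : ℝ) / n) (((i : ℝ) + 1) / n), s t * Real.log (s t) := by
      rw [← mul_assoc]; exact h
    exact le_of_mul_le_mul_left h' hn
  have jen2 : ∀ i : Fin n, (σ i - 1 / (n : ℝ)) ^ 2
      ≤ (1 / (n : ℝ)) * ∫ t in Ioo ((i : ℝ) / n) (((i : ℝ) + 1) / n), (s t - 1) ^ 2 := by
    intro i
    have h := jensen_Ioo (s := s) (g := fun y => (y - 1) ^ 2) (hablt i)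
      (fun x hx => hs_nonneg x (hsub i hx))
      ((convexOn_sub_sq 1).subset (Set.subset_univ _) (convex_Ici 0))
      ((continuous_id.sub continuous_const).pow 2).continuousOn
      (hs_int.mono_set (hsub i)) (hchi_int.mono_set (hsub i))
    rw [hinv i, ← hσ' i] at h
    set I := ∫ t in Ioo ((i : ℝ) / n) (((i : ℝ) + 1) / n), (s t - 1) ^ 2 with hI
    have e : (σ i - 1 / (n : ℝ)) ^ 2 = ((n : ℝ) * σ i - 1) ^ 2 / (n : ℝ) ^ 2 := by
      field_simp
    rw [e, div_le_iff₀ (by positivity)]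
    have e2 : (1 / (n : ℝ)) * I * (n : ℝ) ^ 2 = (n : ℝ) * I := by field_simp
    rw [e2]
    exact h
  have hOm1_int : Om1 σ ≤ ∫ t in Ioo (0 : ℝ) 1, s t * Real.log (s t) := by
    unfold Om1
    calc ∑ i, σ i * Real.log ((n : ℝ) * σ i)
        ≤ ∑ i : Fin n, ∫ t in Ioo ((i : ℝ) / n) (((i : ℝ) + 1) / n), s t * Real.log (s t) :=
          Finset.sum_le_sum fun i _ => jen1 i
      _ = _ := partition_sum _ hKL_int
  have hchi : (∑ i, (σ i - 1 / (n : ℝ)) ^ 2)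
      ≤ (1 / (n : ℝ)) * ∫ t in Ioo (0 : ℝ) 1, (s t - 1) ^ 2 := by
    calc ∑ i, (σ i - 1 / (n : ℝ)) ^ 2
        ≤ ∑ i : Fin n, (1 / (n : ℝ)) * ∫ t in Ioo ((i : ℝ) / n) (((i : ℝ) + 1) / n),
            (s t - 1) ^ 2 := Finset.sum_le_sum fun i _ => jen2 i
      _ = (1 / (n : ℝ)) * ∑ i : Fin n, ∫ t in Ioo ((i : ℝ) / n) (((i : ℝ) + 1) / n),
            (s t - 1) ^ 2 := by rw [Finset.mul_sum]
      _ = _ := by rw [partition_sum _ hchi_int]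
  have hb1 := smoothed_bounds hσ0 hσ1 (Om := Om1)
    (fun lam hlam => om1_nonneg (perm_mem_props hσ0 hlam).1
      (by rw [(perm_mem_props hσ0 hlam).2.2, hσ1]))
    (fun lam hlam => by
      unfold Om1
      exact perm_convex_sum hσ0 hlam (convexOn_xlognx n)) hν l
  have hb2 := smoothed_bounds hσ0 hσ1 (Om := Om2)
    (fun lam hlam => by unfold Om2; positivity)
    (fun lam hlam => by
      unfold Om2
      have := perm_convex_sum hσ0 hlam
        (f := fun x => (x - 1 / (n : ℝ)) ^ 2)
        ((convexOn_sub_sq (1 / (n : ℝ))).subset (Set.subset_univ _) (convex_Ici 0))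
      linarith) hν l
  refine ⟨⟨hb1.1, hb1.2, hOm1_int⟩, hb2.1, ?_, hchi⟩
  have h2 := hb2.2
  have e : ν * Om2 σ = ν / 2 * (∑ i, (σ i - 1 / (n : ℝ)) ^ 2) := by unfold Om2; ring
  rw [e] at h2
  exact h2
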